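/- Let (c_m)_{m≥0} be an absolutely summable real sequence and f(t) = Σ_{m=0}^∞ c_m φ(2^m t) for t ∈ [0,1]. If ρ = (ρ_m)_{m≥0} is a Rademacher expansion of t ∈ [0,1], then f(t) = (1/4) · Σ_{m=0}^∞ c_m · (1 − Σ_{k=1}^∞ 2^{−k} ρ_m ρ_{m+k}). -/

import Mathlib

open MeasureTheory Filter Set

/-- The tent map: distance to the nearest integer. -/
noncomputable def phi (t : ℝ) : ℝ := ⨅ z : ℤ, |t - (z : ℝ)|

/-- A function in the Takagi class, for coefficient sequence `c`. -/
noncomputable def takagiF (c : ℕ → ℝ) (t : ℝ) : ℝ := ∑' m : ℕ, c m * phi (2 ^ m * t)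

/-- `T(ρ) = Σ 2^{-(n+2)} (1 - ρ n)`. -/
noncomputable def Trho (ρ : ℕ → ℝ) : ℝ := ∑' n : ℕ, (1 - ρ n) / 2 ^ (n + 2)

/-- A `{-1,+1}`-valued sequence. -/
def IsSign (ρ : ℕ → ℝ) : Prop := ∀ n, ρ n = 1 ∨ ρ n = -1

/-- `ρ` is a Rademacher expansion of `t`. -/
def IsRademacherExp (ρ : ℕ → ℝ) (t : ℝ) : Prop := IsSign ρ ∧ Trho ρ = t

/-- The step condition for coefficients `c`. -/
def StepCond (c : ℕ → ℝ) (ρ : ℕ → ℝ) : Prop :=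
  ∀ n : ℕ, 1 ≤ n → ρ n * ∑ m ∈ Finset.range n, 2 ^ m * c m * ρ m ≤ 0

noncomputable def sharpAux (c : ℕ → ℝ) : ℕ → ℝ × ℝ
  | 0 => (1, c 0)
  | n + 1 =>
    let S := (sharpAux c n).2
    let r : ℝ := if S ≤ 0 then 1 else -1
    (r, S + 2 ^ (n + 1) * c (n + 1) * r)

/-- The sequence `ρ♯` for coefficients `c`. -/
noncomputable def rhoSharp (c : ℕ → ℝ) (n : ℕ) : ℝ := (sharpAux c n).1

noncomputable def flatAux (c : ℕ → ℝ) : ℕ → ℝ × ℝ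
  | 0 => (1, c 0)
  | n + 1 =>
    let S := (flatAux c n).2
    let r : ℝ := if S < 0 then 1 else -1
    (r, S + 2 ^ (n + 1) * c (n + 1) * r)

/-- The sequence `ρ♭` for coefficients `c`. -/
noncomputable def rhoFlat (c : ℕ → ℝ) (n : ℕ) : ℝ := (flatAux c n).1

/-- The Takagi–Landsberg function with parameter `α`. -/
noncomputable def fTL (α : ℝ) (t : ℝ) : ℝ := ∑' m : ℕ, α ^ m / 2 ^ m * phi (2 ^ m * t)

noncomputable def sharpAuxTL (α : ℝ) : ℕ → ℝ × ℝ
  | 0 => (1, 1)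
  | n + 1 =>
    let S := (sharpAuxTL α n).2
    let r : ℝ := if S ≤ 0 then 1 else -1
    (r, S + α ^ (n + 1) * r)

/-- The sequence `ρ♯(α)` for the Takagi–Landsberg function. -/
noncomputable def rhoSharpTL (α : ℝ) (n : ℕ) : ℝ := (sharpAuxTL α n).1

noncomputable def flatAuxTL (α : ℝ) : ℕ → ℝ × ℝ
  | 0 => (1, 1)
  | n + 1 =>
    let S := (flatAuxTL α n).2
    let r : ℝ := if S < 0 then 1 else -1
    (r, S + α ^ (n + 1) * r)

/-- The sequence `ρ♭(α)` for the Takagi–Landsberg function. -/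
noncomputable def rhoFlatTL (α : ℝ) (n : ℕ) : ℝ := (flatAuxTL α n).1

/-- `τ♯(α) = T(ρ♯(α))`. -/
noncomputable def tauSharp (α : ℝ) : ℝ := Trho (rhoSharpTL α)

/-- `τ♭(α) = T(ρ♭(α))`. -/
noncomputable def tauFlat (α : ℝ) : ℝ := Trho (rhoFlatTL α)

/-- The Littlewood polynomial `p_{2n}(x) = 1 - x - x² - ⋯ - x^{2n}`. -/
noncomputable def p2n (n : ℕ) (x : ℝ) : ℝ := 1 - ∑ m ∈ Finset.Icc 1 (2 * n), x ^ m
lemma phi_bdd (t : ℝ) : BddBelow (Set.range fun z : ℤ => |t - (z : ℝ)|) :=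
  ⟨0, by rintro x ⟨z, rfl⟩; exact abs_nonneg _⟩

lemma phi_eq_min {s : ℝ} (h0 : 0 ≤ s) (h1 : s ≤ 1) : phi s = min s (1 - s) := by
  unfold phi
  apply le_antisymm
  · apply le_min
    · simpa [abs_of_nonneg h0] using ciInf_le (phi_bdd s) (0 : ℤ)
    · have h := ciInf_le (phi_bdd s) (1 : ℤ)
      have he : |s - ((1:ℤ):ℝ)| = 1 - s := by
        rw [abs_sub_comm]; push_cast; exact abs_of_nonneg (by linarith)
      rwa [he] at h
  · apply le_ciInf
    intro z
    rcases le_or_gt (z : ℝ) 0 with h | h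
    · calc min s (1 - s) ≤ s := min_le_left _ _
        _ ≤ s - z := by linarith
        _ ≤ |s - z| := le_abs_self _
    · have hz : (1 : ℝ) ≤ z := by
        have : (0:ℤ) < z := by exact_mod_cast h
        exact_mod_cast this
      calc min s (1 - s) ≤ 1 - s := min_le_right _ _
        _ ≤ z - s := by linarith
        _ ≤ |s - z| := by rw [abs_sub_comm]; exact le_abs_self _

lemma phi_add_int (s : ℝ) (z : ℤ) : phi (s + z) = phi s := by
  unfold phi
  rw [iInf, iInf]
  congr 1
  ext x
  constructor <;> rintro ⟨w, rfl⟩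
  · exact ⟨w - z, by push_cast; ring_nf⟩
  · exact ⟨w + z, by push_cast; ring_nf⟩

lemma habs_div (a : ℝ) (n : ℕ) : |a / 2 ^ n| = |a| * (1/2) ^ n := by
  rw [abs_div, abs_of_nonneg (by positivity : (0:ℝ) ≤ 2 ^ n), div_eq_mul_inv,
    one_div, inv_pow]

lemma half_pow_le {k j : ℕ} (h : k ≤ j) : (1/2:ℝ)^j ≤ (1/2)^k :=
  pow_le_pow_of_le_one (by norm_num) (by norm_num) h

lemma summable_of_bound (f : ℕ → ℝ) (C : ℝ) (h : ∀ n, |f n| ≤ C * (1/2)^n) : Summable f := by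
  rw [← summable_abs_iff]
  exact Summable.of_nonneg_of_le (fun n => abs_nonneg _) h (summable_geometric_two.mul_left C)

lemma abs_sign {ρ : ℕ → ℝ} (h : IsSign ρ) (n : ℕ) : |ρ n| = 1 := by
  rcases h n with h' | h' <;> rw [h'] <;> norm_num

lemma sign_bound {ρ : ℕ → ℝ} (h : IsSign ρ) (a : ℝ) (n j : ℕ) (hj : a = 1 - ρ n ∨ a = ρ n) :
    |a / 2 ^ (j)| ≤ 2 * (1/2)^j := by
  rw [habs_div]
  have h1 : |a| ≤ 2 := by
    rcases hj with rfl | rfl <;> rcases h n with h' | h' <;> rw [h'] <;> norm_num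
  have h2 : (0:ℝ) ≤ (1/2)^j := by positivity
  nlinarith

lemma summable_trho {ρ : ℕ → ℝ} (h : IsSign ρ) :
    Summable fun n => (1 - ρ n) / 2 ^ (n + 2) := by
  apply summable_of_bound _ 2
  intro n
  calc |(1 - ρ n) / 2 ^ (n + 2)| ≤ 2 * (1/2)^(n+2) := sign_bound h _ n _ (Or.inl rfl)
    _ ≤ 2 * (1/2)^n := by gcongr 2 * ?_; exact half_pow_le (by omega)

lemma hasSum_geo_shift (j : ℕ) : HasSum (fun k : ℕ => (1/2 : ℝ)^(k+j)) ((1/2)^j * 2) := by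
  have h := (summable_geometric_two.hasSum).mul_left ((1/2 : ℝ)^j)
  rw [tsum_geometric_two] at h
  have e : (fun k : ℕ => (1/2 : ℝ)^(k+j)) = fun i => (1/2)^j * (1/2)^i :=
    funext fun k => by rw [pow_add]; ring
  rw [e]; exact h

lemma one_div_two_pow (n : ℕ) : (1/2:ℝ)^n = 1 / 2^n := by
  rw [one_div, inv_pow, one_div]

set_option maxHeartbeats 1000000 in
lemma key {ρ : ℕ → ℝ} (hρ : IsSign ρ) (m : ℕ) :
    phi (2 ^ m * Trho ρ) = (1/4) * (1 - ∑' k : ℕ, ρ m * ρ (m + (k+1)) / 2 ^ (k+1)) := by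
  have hs := summable_trho hρ
  set B : ℝ := ∑' k : ℕ, ρ (m + (k+1)) / 2 ^ (k+1) with hB
  have hbound : ∀ k : ℕ, |ρ (m + (k+1)) / 2 ^ (k+1)| ≤ (1/2 : ℝ)^(k+1) := by
    intro k; rw [habs_div, abs_sign hρ, one_mul]
  have hsB : Summable fun k : ℕ => ρ (m + (k+1)) / 2 ^ (k+1) := by
    apply summable_of_bound _ 1
    intro k
    calc |ρ (m + (k+1)) / 2 ^ (k+1)| ≤ (1/2)^(k+1) := hbound k
      _ ≤ 1 * (1/2)^k := by rw [one_mul]; exact half_pow_le (by omega)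
  have hBle : |B| ≤ 1 := by
    have hgs : HasSum (fun k : ℕ => (1/2 : ℝ)^(k+1)) 1 := by
      simpa using hasSum_geo_shift 1
    have := tsum_of_norm_bounded (f := fun k : ℕ => ρ (m + (k+1)) / 2 ^ (k+1)) hgs
      (fun k => by rw [Real.norm_eq_abs]; exact hbound k)
    simpa using this
  have hsplit := Summable.sum_add_tsum_nat_add m hs
  set N : ℝ := ∑ n ∈ Finset.range m, (1 - ρ n) / 2 ^ (n + 2) with hN
  have hts : Summable fun k : ℕ => (1 - ρ (k + m)) / 2 ^ (k + 2) := by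
    apply summable_of_bound _ 2
    intro k
    calc |(1 - ρ (k + m)) / 2 ^ (k+2)| ≤ 2 * (1/2)^(k+2) := sign_bound hρ _ (k+m) _ (Or.inl rfl)
      _ ≤ 2 * (1/2)^k := by gcongr 2 * ?_; exact half_pow_le (by omega)
  set s : ℝ := ∑' k : ℕ, (1 - ρ (k + m)) / 2 ^ (k + 2) with hsdef
  have hmul : 2 ^ m * Trho ρ = s + 2 ^ m * N := by
    rw [show Trho ρ = ∑' n : ℕ, (1 - ρ n) / 2 ^ (n + 2) from rfl, ← hsplit, mul_add, add_comm]
    congr 1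
    rw [← tsum_mul_left]
    apply tsum_congr
    intro k
    rw [show k + m + 2 = (k + 2) + m from by ring, pow_add]
    field_simp
  obtain ⟨z, hz⟩ : ∃ z : ℤ, 2 ^ m * N = (z : ℝ) := by
    classical
    refine ⟨∑ n ∈ Finset.range m, if ρ n = 1 then 0 else 2 ^ (m - n - 1), ?_⟩
    rw [hN, Finset.mul_sum]
    push_cast
    apply Finset.sum_congr rfl
    intro n hn
    have hnm : n + 1 ≤ m := Finset.mem_range.mp hn
    rcases hρ n with h' | h'
    · simp [h']
    · rw [h', if_neg (by norm_num)]
      push_cast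
      have hpe : (2:ℝ) ^ (m - n - 1) * 2 ^ (n + 1) = 2 ^ m := by
        rw [← pow_add]; congr 1; omega
      have h2 : (2:ℝ) ^ (n+2) ≠ 0 := by positivity
      field_simp
      rw [show n + 2 = (n + 1) + 1 from rfl, pow_succ]
      nlinarith [hpe]
  -- compute s in terms of B
  have hsval : s = (1 - ρ m) / 4 + 1/4 - B/4 := by
    rw [hsdef, Summable.tsum_eq_zero_add hts]
    have h0 : (1 - ρ (0 + m)) / 2 ^ (0 + 2) = (1 - ρ m) / 4 := by norm_num
    rw [h0]
    have hsa : Summable fun k : ℕ => (1/2 : ℝ)^(k+3) := (hasSum_geo_shift 3).summable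
    have hsb : Summable fun k : ℕ => (1/4 : ℝ) * (ρ (m + (k+1)) / 2 ^ (k+1)) := hsB.mul_left _
    have e1 : ∀ k : ℕ, (1 - ρ (k + 1 + m)) / 2 ^ (k + 1 + 2)
        = (1/2:ℝ)^(k+3) - (1/4) * (ρ (m + (k+1)) / 2 ^ (k+1)) := by
      intro k
      rw [show k + 1 + m = m + (k+1) from by ring, one_div_two_pow,
        show k + 1 + 2 = k + 3 from rfl, show k + 3 = (k+1) + 2 from by ring, pow_add]
      field_simp
      ring
    rw [tsum_congr e1, Summable.tsum_sub hsa hsb, (hasSum_geo_shift 3).tsum_eq, tsum_mul_left, ← hB]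
    norm_num
    ring
  have hBr : -1 ≤ B ∧ B ≤ 1 := abs_le.mp hBle
  have hrw : (∑' k : ℕ, ρ m * ρ (m + (k+1)) / 2 ^ (k+1)) = ρ m * B := by
    rw [hB, ← tsum_mul_left]
    apply tsum_congr
    intro k
    ring
  rw [hmul, hz, phi_add_int, hrw]
  rcases hρ m with h' | h'
  · have hs' : s = (1 - B)/4 := by rw [hsval, h']; ring
    rw [hs', phi_eq_min (by linarith [hBr.2]) (by linarith [hBr.1]), h',
      min_eq_left (by linarith [hBr.1])]
    ring
  · have hs' : s = (3 - B)/4 := by rw [hsval, h']; ring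
    rw [hs', phi_eq_min (by linarith [hBr.2]) (by linarith [hBr.1]), h',
      min_eq_right (by linarith [hBr.1])]
    ring

theorem takagi_class_rademacher_formula
    (c : ℕ → ℝ) (hc : Summable fun m => |c m|)
    (t : ℝ) (ht : t ∈ Set.Icc (0 : ℝ) 1)
    (ρ : ℕ → ℝ) (hρ : IsRademacherExp ρ t) :
    takagiF c t
      = (1 / 4) * ∑' m : ℕ, c m * (1 - ∑' k : ℕ, ρ m * ρ (m + (k + 1)) / 2 ^ (k + 1)) := by
  obtain ⟨hsign, hT⟩ := hρ
  calc takagiF c t = ∑' m : ℕ, c m * phi (2 ^ m * Trho ρ) := by rw [hT]; rfl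
    _ = ∑' m : ℕ, (1/4) * (c m * (1 - ∑' k : ℕ, ρ m * ρ (m + (k + 1)) / 2 ^ (k + 1))) :=
        tsum_congr fun m => by rw [key hsign m]; ring
    _ = (1/4) * ∑' m : ℕ, c m * (1 - ∑' k : ℕ, ρ m * ρ (m + (k + 1)) / 2 ^ (k + 1)) :=
        tsum_mul_left
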